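/- Let S be a Polish space and E a convex pre-kernel from BUC(S) to C_b(S) which is continuous from above. Then there is exactly one convex pre-kernel Ê from C_b(S) to C_b(S) which is continuous from above and restricts to E on BUC(S). -/

import Mathlib

open Filter

def IsBddR {S : Type*} (f : S → ℝ) : Prop := ∃ C : ℝ, ∀ x, |f x| ≤ C

def InBUC {S : Type*} [MetricSpace S] (f : S → ℝ) : Prop :=
  UniformContinuous f ∧ IsBddR f

def InCb {S : Type*} [TopologicalSpace S] (f : S → ℝ) : Prop :=
  Continuous f ∧ IsBddR f

/-- `E` is a convex pre-kernel from `A` to `C_b(S)` which is continuous from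
above: each `E(x,·)` is a monotone, constant preserving, convex functional on
`A`, continuous from above on `A`, and `E(·,f) ∈ C_b(S)` for `f ∈ A`. -/
def IsConvexKernelOn {S : Type*} [TopologicalSpace S] (A : Set (S → ℝ))
    (E : S → (S → ℝ) → ℝ) : Prop :=
  (∀ x : S, ∀ f ∈ A, ∀ g ∈ A, (∀ y, f y ≤ g y) → E x f ≤ E x g) ∧
  (∀ (x : S) (c : ℝ), E x (fun _ => c) = c) ∧
  (∀ f ∈ A, InCb fun x => E x f) ∧
  (∀ x : S, ∀ f ∈ A, ∀ g ∈ A, ∀ t ∈ Set.Icc (0:ℝ) 1,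
    E x (fun y => t * f y + (1 - t) * g y) ≤ t * E x f + (1 - t) * E x g) ∧
  (∀ x : S, ∀ (fn : ℕ → S → ℝ) (f : S → ℝ), (∀ n, fn n ∈ A) → f ∈ A →
    (∀ y, Antitone fun n => fn n y) →
    (∀ y, Tendsto (fun n => fn n y) atTop (nhds (f y))) →
    Tendsto (fun n => E x (fn n)) atTop (nhds (E x f)))

set_option linter.unusedSectionVars false

namespace Stmt18
variable {S : Type*} [MetricSpace S]

noncomputable def upA (f : S → ℝ) (n : ℕ) (x : S) : ℝ := ⨆ y, (f y - n * dist x y)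

variable [Nonempty S]

lemma upA_bddAbove {f : S → ℝ} {C : ℝ} (hC : ∀ y, |f y| ≤ C) (n : ℕ) (x : S) :
    BddAbove (Set.range fun y => f y - n * dist x y) := by
  refine ⟨C, ?_⟩
  rintro _ ⟨y, rfl⟩
  show f y - n * dist x y ≤ C
  have h1 := (abs_le.1 (hC y)).2
  have h2 : (0:ℝ) ≤ n * dist x y := by positivity
  linarith

lemma upA_le {f : S → ℝ} {C : ℝ} (hC : ∀ y, |f y| ≤ C) (n : ℕ) (x : S) :
    upA f n x ≤ C := by
  refine ciSup_le fun y => ?_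
  show f y - n * dist x y ≤ C
  have h1 := (abs_le.1 (hC y)).2
  have h2 : (0:ℝ) ≤ n * dist x y := by positivity
  linarith

lemma le_upA {f : S → ℝ} {C : ℝ} (hC : ∀ y, |f y| ≤ C) (n : ℕ) (x : S) :
    f x ≤ upA f n x := by
  have := le_ciSup (upA_bddAbove hC n x) x
  simpa [upA] using this

lemma upA_abs_le {f : S → ℝ} {C : ℝ} (hC : ∀ y, |f y| ≤ C) (n : ℕ) (x : S) :
    |upA f n x| ≤ C :=
  abs_le.2 ⟨le_trans (abs_le.1 (hC x)).1 (le_upA hC n x), upA_le hC n x⟩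

lemma upA_antitone {f : S → ℝ} {C : ℝ} (hC : ∀ y, |f y| ≤ C) (x : S) :
    Antitone fun n => upA f n x := by
  intro n m hnm
  refine ciSup_le fun y => ?_
  refine le_trans ?_ (le_ciSup (upA_bddAbove hC n x) y)
  have : (n:ℝ) * dist x y ≤ (m:ℝ) * dist x y := by
    have : (n:ℝ) ≤ m := by exact_mod_cast hnm
    nlinarith [dist_nonneg (x := x) (y := y)]
  linarith

lemma upA_mono {f g : S → ℝ} {C : ℝ} (hC : ∀ y, |g y| ≤ C) (h : ∀ y, f y ≤ g y)
    (n : ℕ) (x : S) : upA f n x ≤ upA g n x := by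
  refine ciSup_le fun y => le_trans ?_ (le_ciSup (upA_bddAbove hC n x) y)
  have := h y; linarith

lemma upA_lip {f : S → ℝ} {C : ℝ} (hC : ∀ y, |f y| ≤ C) (n : ℕ) (x x' : S) :
    upA f n x ≤ upA f n x' + n * dist x x' := by
  refine ciSup_le fun y => ?_
  have h1 : f y - n * dist x' y ≤ upA f n x' := le_ciSup (upA_bddAbove hC n x') y
  have h2 : dist x' y ≤ dist x' x + dist x y := dist_triangle _ _ _
  have h3 : (n:ℝ) * dist x' y ≤ n * dist x' x + n * dist x y := by
    rw [← mul_add]; exact mul_le_mul_of_nonneg_left h2 (by positivity)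
  have h4 : (n:ℝ) * dist x' x = n * dist x x' := by rw [dist_comm]
  show f y - n * dist x y ≤ upA f n x' + n * dist x x'
  linarith

lemma upA_uc {f : S → ℝ} {C : ℝ} (hC : ∀ y, |f y| ≤ C) (n : ℕ) :
    UniformContinuous (upA f n) := by
  rw [Metric.uniformContinuous_iff]
  intro ε hε
  refine ⟨ε / (n + 1), by positivity, fun {a b} hab => ?_⟩
  have h1 := upA_lip hC n a b
  have h2 := upA_lip hC n b a
  have hd' : (n:ℝ) * dist b a = n * dist a b := by rw [dist_comm]
  have key : (n:ℝ) * dist a b < ε := by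
    have hn1 : (0:ℝ) < (n:ℝ) + 1 := by positivity
    calc (n:ℝ) * dist a b ≤ ((n:ℝ)+1) * dist a b := by
            nlinarith [dist_nonneg (x := a) (y := b)]
      _ < ((n:ℝ)+1) * (ε/((n:ℝ)+1)) := by exact mul_lt_mul_of_pos_left hab hn1
      _ = ε := by field_simp
  rw [Real.dist_eq, abs_lt]
  constructor <;> linarith

lemma upA_inBUC {f : S → ℝ} {C : ℝ} (hC : ∀ y, |f y| ≤ C) (n : ℕ) :
    InBUC (upA f n) := ⟨upA_uc hC n, C, upA_abs_le hC n⟩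

lemma upA_const (c : ℝ) (n : ℕ) (x : S) : upA (fun _ => (c:ℝ)) n x = c := by
  refine le_antisymm (ciSup_le fun y => ?_) ?_
  · have : (0:ℝ) ≤ n * dist x y := by positivity
    linarith
  · have := le_upA (f := fun _ => c) (C := |c|) (fun _ => le_refl _) n x
    simpa using this

lemma upA_tendsto {f : S → ℝ} {C : ℝ} (hC : ∀ y, |f y| ≤ C) (hf : Continuous f) (x : S) :
    Tendsto (fun n => upA f n x) atTop (nhds (f x)) := by
  rw [Metric.tendsto_atTop]
  intro ε hε
  obtain ⟨δ, hδ, hball⟩ := Metric.continuousAt_iff.mp hf.continuousAt (ε/2) (by positivity)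
  obtain ⟨N, hN⟩ := exists_nat_gt ((C - f x) / δ)
  refine ⟨N, fun n hn => ?_⟩
  have hle : upA f n x ≤ f x + ε/2 := by
    refine ciSup_le fun y => ?_
    by_cases hy : dist x y < δ
    · have := hball (show dist y x < δ by rwa [dist_comm])
      rw [Real.dist_eq, abs_lt] at this
      have h2 : (0:ℝ) ≤ n * dist x y := by positivity
      linarith [this.2]
    · push_neg at hy
      have h1 : (C - f x)/δ < n := lt_of_lt_of_le hN (by exact_mod_cast hn)
      have h2 : C - f x < n * δ := by
        rw [div_lt_iff₀ hδ] at h1; linarith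
      have h3 : (n:ℝ) * δ ≤ n * dist x y := mul_le_mul_of_nonneg_left hy (by positivity)
      have h4 := (abs_le.1 (hC y)).2
      linarith
  have hge : f x ≤ upA f n x := le_upA hC n x
  rw [Real.dist_eq, abs_lt]
  constructor <;> linarith

lemma bdd_nonneg {f : S → ℝ} {C : ℝ} (hC : ∀ y, |f y| ≤ C) : 0 ≤ C :=
  le_trans (abs_nonneg _) (hC (Classical.arbitrary S))

lemma inBUC_max {f g : S → ℝ} (hf : InBUC f) (hg : InBUC g) :
    InBUC fun x => max (f x) (g x) := by
  obtain ⟨Cf, hCf⟩ := hf.2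
  obtain ⟨Cg, hCg⟩ := hg.2
  have h0f : 0 ≤ Cf := bdd_nonneg hCf
  have h0g : 0 ≤ Cg := bdd_nonneg hCg
  constructor
  · have heq : (fun x => max (f x) (g x)) = fun x => (f x + g x + |f x - g x|)/2 := by
      funext x
      rcases le_total (f x) (g x) with h | h
      · rw [max_eq_right h, abs_of_nonpos (by linarith)]; ring
      · rw [max_eq_left h, abs_of_nonneg (by linarith)]; ring
    rw [heq]
    exact ((hf.1.add hg.1).add (Real.uniformContinuous_abs.comp (hf.1.sub hg.1))).div_const' 2
  · refine ⟨Cf + Cg, fun x => abs_le.2 ⟨?_, ?_⟩⟩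
    · have := (abs_le.1 (hCf x)).1
      have := le_max_left (f x) (g x)
      linarith
    · exact max_le (by linarith [(abs_le.1 (hCf x)).2]) (by linarith [(abs_le.1 (hCg x)).2])

lemma inBUC_min {f g : S → ℝ} (hf : InBUC f) (hg : InBUC g) :
    InBUC fun x => min (f x) (g x) := by
  obtain ⟨Cf, hCf⟩ := hf.2
  obtain ⟨Cg, hCg⟩ := hg.2
  constructor
  · have heq : (fun x => min (f x) (g x)) = fun x => (f x + g x - |f x - g x|)/2 := by
      funext x
      rcases le_total (f x) (g x) with h | h
      · rw [min_eq_left h, abs_of_nonpos (by linarith)]; ring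
      · rw [min_eq_right h, abs_of_nonneg (by linarith)]; ring
    rw [heq]
    exact ((hf.1.add hg.1).sub (Real.uniformContinuous_abs.comp (hf.1.sub hg.1))).div_const' 2
  · have h0g : 0 ≤ Cg := bdd_nonneg hCg
    have h0f : 0 ≤ Cf := bdd_nonneg hCf
    refine ⟨Cf + Cg, fun x => abs_le.2 ⟨?_, ?_⟩⟩
    · exact le_min (by linarith [(abs_le.1 (hCf x)).1]) (by linarith [(abs_le.1 (hCg x)).1])
    · have := (abs_le.1 (hCf x)).2
      have := min_le_left (f x) (g x)
      linarith

lemma inBUC_comb (a b : ℝ) {f g : S → ℝ} (hf : InBUC f) (hg : InBUC g) :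
    InBUC fun x => a * f x + b * g x := by
  obtain ⟨Cf, hCf⟩ := hf.2
  obtain ⟨Cg, hCg⟩ := hg.2
  refine ⟨(hf.1.const_mul' a).add (hg.1.const_mul' b), |a| * Cf + |b| * Cg, fun x => ?_⟩
  calc |a * f x + b * g x| ≤ |a * f x| + |b * g x| := abs_add_le _ _
    _ = |a| * |f x| + |b| * |g x| := by rw [abs_mul, abs_mul]
    _ ≤ |a| * Cf + |b| * Cg := by
        gcongr <;> [exact hCf x; exact hCg x]

lemma inBUC_const (c : ℝ) : InBUC (fun _ : S => c) :=
  ⟨uniformContinuous_const, |c|, fun _ => le_refl _⟩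

noncomputable def loA (f : S → ℝ) (n : ℕ) (x : S) : ℝ := -(upA (fun y => -(f y)) n x)

lemma negbd {f : S → ℝ} {C : ℝ} (hC : ∀ y, |f y| ≤ C) : ∀ y, |-(f y)| ≤ C := by
  intro y; rw [abs_neg]; exact hC y

lemma loA_abs_le {f : S → ℝ} {C : ℝ} (hC : ∀ y, |f y| ≤ C) (n : ℕ) (x : S) :
    |loA f n x| ≤ C := by
  rw [loA, abs_neg]; exact upA_abs_le (negbd hC) n x

lemma loA_le {f : S → ℝ} {C : ℝ} (hC : ∀ y, |f y| ≤ C) (n : ℕ) (x : S) :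
    loA f n x ≤ f x := by
  have := le_upA (negbd hC) n x
  rw [loA]; linarith

lemma loA_mono {f : S → ℝ} {C : ℝ} (hC : ∀ y, |f y| ≤ C) (x : S) :
    Monotone fun n => loA f n x := by
  intro n m hnm
  have := upA_antitone (negbd hC) x hnm
  simp only [loA]; linarith

lemma loA_inBUC {f : S → ℝ} {C : ℝ} (hC : ∀ y, |f y| ≤ C) (n : ℕ) :
    InBUC (loA f n) := by
  have h := upA_inBUC (negbd hC) n
  exact ⟨h.1.neg, C, loA_abs_le hC n⟩

lemma loA_tendsto {f : S → ℝ} {C : ℝ} (hC : ∀ y, |f y| ≤ C) (hf : Continuous f) (x : S) :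
    Tendsto (fun n => loA f n x) atTop (nhds (f x)) := by
  have := (upA_tendsto (negbd hC) hf.neg x).neg
  simpa [loA] using this

section E
variable (E : S → (S → ℝ) → ℝ)

noncomputable def EhatD (f : S → ℝ) (x : S) : ℝ := ⨅ n, E x (upA f n)

variable {E}
variable (hE : IsConvexKernelOn {f : S → ℝ | InBUC f} E)
include hE

lemma Emono {x : S} {f g : S → ℝ} (hf : InBUC f) (hg : InBUC g) (h : ∀ y, f y ≤ g y) :
    E x f ≤ E x g := hE.1 x f hf g hg h

lemma Ebound {x : S} {f : S → ℝ} {C : ℝ} (hf : InBUC f) (hC : ∀ y, |f y| ≤ C) :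
    |E x f| ≤ C := by
  refine abs_le.2 ⟨?_, ?_⟩
  · have h := Emono hE (x := x) (inBUC_const (-C)) hf (fun y => (abs_le.1 (hC y)).1)
    rwa [hE.2.1 x (-C)] at h
  · have h := Emono hE (x := x) hf (inBUC_const C) (fun y => (abs_le.1 (hC y)).2)
    rwa [hE.2.1 x C] at h

/-- bddBelow of the defining family. -/
lemma EupA_bddBelow {x : S} {f : S → ℝ} {C : ℝ} (hC : ∀ y, |f y| ≤ C) :
    BddBelow (Set.range fun n => E x (upA f n)) := by
  refine ⟨-C, ?_⟩
  rintro _ ⟨n, rfl⟩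
  exact (abs_le.1 (Ebound hE (upA_inBUC hC n) (upA_abs_le hC n))).1

/-- Key Lemma (L1): for any antitone BUC sequence decreasing pointwise to a
continuous bounded `f`, the values `E x (ψ n)` converge to `EhatD E f x`. -/
lemma L1 {x : S} {f : S → ℝ} {C : ℝ} (hC : ∀ y, |f y| ≤ C) (hf : Continuous f)
    (ψ : ℕ → S → ℝ) (hψB : ∀ n, InBUC (ψ n))
    (hanti : ∀ y, Antitone fun n => ψ n y)
    (hlim : ∀ y, Tendsto (fun n => ψ n y) atTop (nhds (f y))) :
    Tendsto (fun n => E x (ψ n)) atTop (nhds (EhatD E f x)) := by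
  have hψge : ∀ n y, f y ≤ ψ n y := by
    intro n y
    exact le_of_tendsto (hlim y) (eventually_atTop.2 ⟨n, fun m hm => hanti y hm⟩)
  have haA : Antitone fun n => E x (ψ n) := by
    intro n m hnm
    exact Emono hE (hψB m) (hψB n) (fun y => hanti y hnm)
  have haBdd : BddBelow (Set.range fun n => E x (ψ n)) := by
    refine ⟨-C, ?_⟩
    rintro _ ⟨n, rfl⟩
    have h1 := Emono hE (x := x) (inBUC_const (-C)) (hψB n)
      (fun y => le_trans (abs_le.1 (hC y)).1 (hψge n y))
    rwa [hE.2.1 x (-C)] at h1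
  have htendA : Tendsto (fun n => E x (ψ n)) atTop (nhds (⨅ n, E x (ψ n))) :=
    tendsto_atTop_ciInf haA haBdd
  -- claim 1 : ⨅ n, E x (ψ n) ≤ E x (upA f m) for all m
  have claim1 : ∀ m, (⨅ n, E x (ψ n)) ≤ E x (upA f m) := by
    intro m
    set φ : ℕ → S → ℝ := fun k y => max (ψ k y) (upA f m y) with hφ
    have hφB : ∀ k, InBUC (φ k) := fun k => inBUC_max (hψB k) (upA_inBUC hC m)
    have hφanti : ∀ y, Antitone fun k => φ k y := fun y k l hkl =>
      max_le_max (hanti y hkl) (le_refl _)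
    have hφlim : ∀ y, Tendsto (fun k => φ k y) atTop (nhds (upA f m y)) := by
      intro y
      have h := (hlim y).max (tendsto_const_nhds (x := upA f m y) (f := atTop))
      rwa [max_eq_right (le_upA hC m y)] at h
    have hcont := hE.2.2.2.2 x φ (upA f m) (fun k => hφB k) (upA_inBUC hC m) hφanti hφlim
    refine ge_of_tendsto hcont (Eventually.of_forall fun k => ?_)
    refine le_trans (ciInf_le haBdd k) ?_
    exact Emono hE (hψB k) (hφB k) (fun y => le_max_left _ _)
  -- claim 2 : EhatD E f x ≤ E x (ψ k) for all k
  have claim2 : ∀ k, EhatD E f x ≤ E x (ψ k) := by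
    intro k
    set φ : ℕ → S → ℝ := fun m y => max (upA f m y) (ψ k y) with hφ
    have hφB : ∀ m, InBUC (φ m) := fun m => inBUC_max (upA_inBUC hC m) (hψB k)
    have hφanti : ∀ y, Antitone fun m => φ m y := fun y m l hml =>
      max_le_max (upA_antitone hC y hml) (le_refl _)
    have hφlim : ∀ y, Tendsto (fun m => φ m y) atTop (nhds (ψ k y)) := by
      intro y
      have h := (upA_tendsto hC hf y).max (tendsto_const_nhds (x := ψ k y) (f := atTop))
      rwa [max_eq_right (hψge k y)] at h
    have hcont := hE.2.2.2.2 x φ (ψ k) (fun m => hφB m) (hψB k) hφanti hφlim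
    refine ge_of_tendsto hcont (Eventually.of_forall fun m => ?_)
    refine le_trans (ciInf_le (EupA_bddBelow hE hC) m) ?_
    exact Emono hE (upA_inBUC hC m) (hφB m) (fun y => le_max_left _ _)
  have heq : (⨅ n, E x (ψ n)) = EhatD E f x := by
    refine le_antisymm (le_ciInf claim1) (le_ciInf claim2)
  rwa [heq] at htendA

/-- restriction -/
lemma R1 {x : S} {f : S → ℝ} (hf : InBUC f) : EhatD E f x = E x f := by
  obtain ⟨C, hC⟩ := hf.2
  have h1 := L1 hE (x := x) hC hf.1.continuous (fun n => upA f n)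
    (fun n => upA_inBUC hC n) (upA_antitone hC) (upA_tendsto hC hf.1.continuous)
  have h2 := hE.2.2.2.2 x (fun n => upA f n) f (fun n => upA_inBUC hC n) hf
    (upA_antitone hC) (upA_tendsto hC hf.1.continuous)
  exact tendsto_nhds_unique h1 h2

/-- monotone -/
lemma R2 {x : S} {f g : S → ℝ} {Cf Cg : ℝ} (hCf : ∀ y, |f y| ≤ Cf) (hCg : ∀ y, |g y| ≤ Cg)
    (h : ∀ y, f y ≤ g y) : EhatD E f x ≤ EhatD E g x := by
  refine le_ciInf fun n => ?_
  refine le_trans (ciInf_le (EupA_bddBelow hE hCf) n) ?_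
  exact Emono hE (upA_inBUC hCf n) (upA_inBUC hCg n) (fun y => upA_mono hCg h n y)

/-- constants -/
lemma R3 {x : S} (c : ℝ) : EhatD E (fun _ => c) x = c := by
  have : ∀ n : ℕ, E x (upA (fun _ => c) n) = c := by
    intro n
    have : upA (fun _ : S => c) n = fun _ => c := funext fun y => upA_const c n y
    rw [this, hE.2.1]
  simp only [EhatD, this, ciInf_const]

/-- bound -/
lemma R4 {x : S} {f : S → ℝ} {C : ℝ} (hC : ∀ y, |f y| ≤ C) : |EhatD E f x| ≤ C := by
  refine abs_le.2 ⟨?_, ?_⟩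
  · refine le_ciInf fun n => ?_
    exact (abs_le.1 (Ebound hE (upA_inBUC hC n) (upA_abs_le hC n))).1
  · refine le_trans (ciInf_le (EupA_bddBelow hE hC) 0) ?_
    exact (abs_le.1 (Ebound hE (upA_inBUC hC 0) (upA_abs_le hC 0))).2

/-- EhatD is below E on BUC majorants -/
lemma R5 {x : S} {f g : S → ℝ} {C : ℝ} (hC : ∀ y, |f y| ≤ C) (hf : Continuous f)
    (hg : InBUC g) (hfg : ∀ y, f y ≤ g y) : EhatD E f x ≤ E x g := by
  set ψ : ℕ → S → ℝ := fun k y => min (upA f k y) (g y) with hψ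
  have hψB : ∀ k, InBUC (ψ k) := fun k => inBUC_min (upA_inBUC hC k) hg
  have hψanti : ∀ y, Antitone fun k => ψ k y := fun y k l hkl =>
    min_le_min (upA_antitone hC y hkl) (le_refl _)
  have hψlim : ∀ y, Tendsto (fun k => ψ k y) atTop (nhds (f y)) := by
    intro y
    have h := (upA_tendsto hC hf y).min (tendsto_const_nhds (x := g y) (f := atTop))
    rwa [min_eq_left (hfg y)] at h
  have h1 := L1 hE (x := x) hC hf ψ hψB hψanti hψlim
  refine le_of_tendsto h1 (Eventually.of_forall fun k => ?_)
  exact Emono hE (hψB k) hg (fun y => min_le_right _ _)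

/-- key: Ehat equals the sup of lower approximations (uses convexity) -/
lemma R7 {x : S} {f : S → ℝ} {C : ℝ} (hC : ∀ y, |f y| ≤ C) (hf : Continuous f) :
    EhatD E f x = ⨆ n, E x (loA f n) := by
  have hloB : ∀ n, InBUC (loA f n) := fun n => loA_inBUC hC n
  have hlo_bddA : BddAbove (Set.range fun n => E x (loA f n)) := by
    refine ⟨C, ?_⟩
    rintro _ ⟨n, rfl⟩
    exact (abs_le.1 (Ebound hE (hloB n) (loA_abs_le hC n))).2
  have hle : (⨆ n, E x (loA f n)) ≤ EhatD E f x := by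
    refine ciSup_le fun n => le_ciInf fun m => ?_
    exact Emono hE (hloB n) (upA_inBUC hC m)
      (fun y => le_trans (loA_le hC n y) (le_upA hC m y))
  refine le_antisymm ?_ hle
  -- convexity argument with χ k = 2 upA - loA
  set χ : ℕ → S → ℝ := fun k y => 2 * upA f k y + (-1) * loA f k y with hχ
  have hχB : ∀ k, InBUC (χ k) := fun k => inBUC_comb 2 (-1) (upA_inBUC hC k) (hloB k)
  have hχanti : ∀ y, Antitone fun k => χ k y := by
    intro y k l hkl
    have h1 := upA_antitone hC y hkl
    have h2 := loA_mono hC y hkl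
    simp only [hχ]
    linarith
  have hχlim : ∀ y, Tendsto (fun k => χ k y) atTop (nhds (f y)) := by
    intro y
    have h := ((upA_tendsto hC hf y).const_mul 2).add ((loA_tendsto hC hf y).const_mul (-1))
    have : (2 : ℝ) * f y + (-1) * f y = f y := by ring
    rwa [this] at h
  have htχ := L1 hE (x := x) hC hf χ hχB hχanti hχlim
  have htu := L1 hE (x := x) hC hf (fun k => upA f k) (fun k => upA_inBUC hC k)
    (upA_antitone hC) (upA_tendsto hC hf)
  have htl : Tendsto (fun k => E x (loA f k)) atTop (nhds (⨆ n, E x (loA f n))) := by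
    refine tendsto_atTop_ciSup ?_ hlo_bddA
    intro k l hkl
    exact Emono hE (hloB k) (hloB l) (fun y => loA_mono hC y hkl)
  have hconv : ∀ k, E x (upA f k) ≤ (1/2 : ℝ) * E x (loA f k) + (1 - 1/2 : ℝ) * E x (χ k) := by
    intro k
    have h := hE.2.2.2.1 x (loA f k) (hloB k) (χ k) (hχB k) (1/2)
      ⟨by norm_num, by norm_num⟩
    have heq : (fun y => (1/2 : ℝ) * loA f k y + (1 - 1/2 : ℝ) * χ k y) = upA f k := by
      funext y
      simp only [hχ]
      ring
    rwa [heq] at h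
  have hrhs : Tendsto (fun k => (1/2 : ℝ) * E x (loA f k) + (1 - 1/2 : ℝ) * E x (χ k)) atTop
      (nhds ((1/2 : ℝ) * (⨆ n, E x (loA f n)) + (1 - 1/2 : ℝ) * EhatD E f x)) :=
    (htl.const_mul _).add (htχ.const_mul _)
  have hfin := le_of_tendsto_of_tendsto' htu hrhs hconv
  linarith

/-- E x (loA f n) is below EhatD -/
lemma R7le {x : S} {f : S → ℝ} {C : ℝ} (hC : ∀ y, |f y| ≤ C) (n : ℕ) :
    E x (loA f n) ≤ EhatD E f x := by
  refine le_ciInf fun m => ?_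
  exact Emono hE (loA_inBUC hC n) (upA_inBUC hC m)
    (fun y => le_trans (loA_le hC n y) (le_upA hC m y))

/-- continuity of x ↦ EhatD E f x -/
lemma R8 {f : S → ℝ} {C : ℝ} (hC : ∀ y, |f y| ≤ C) (hf : Continuous f) :
    Continuous fun x => EhatD E f x := by
  rw [continuous_iff_continuousAt]
  intro x₀
  have hcu : ∀ m, Continuous fun x => E x (upA f m) := fun m =>
    (hE.2.2.1 (upA f m) (upA_inBUC hC m)).1
  have hcl : ∀ n, Continuous fun x => E x (loA f n) := fun n =>
    (hE.2.2.1 (loA f n) (loA_inBUC hC n)).1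
  set A := EhatD E f x₀ with hA
  rw [ContinuousAt, Metric.tendsto_nhds]
  intro ε hε
  obtain ⟨m, hm⟩ : ∃ m, E x₀ (upA f m) < A + ε/2 :=
    exists_lt_of_ciInf_lt (by simpa [hA, EhatD] using (by linarith : A < A + ε/2))
  obtain ⟨n, hn⟩ : ∃ n, A - ε/2 < E x₀ (loA f n) := by
    have h7 := R7 hE (x := x₀) hC hf
    refine exists_lt_of_lt_ciSup ?_
    rw [← h7]
    linarith
  have ev1 : ∀ᶠ x in nhds x₀, E x (upA f m) < A + ε/2 :=
    ((hcu m).continuousAt (x := x₀)).eventually_lt_const hm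
  have ev2 : ∀ᶠ x in nhds x₀, A - ε/2 < E x (loA f n) :=
    ((hcl n).continuousAt (x := x₀)).eventually_const_lt hn
  filter_upwards [ev1, ev2] with x h1 h2
  have hub : EhatD E f x ≤ E x (upA f m) := ciInf_le (EupA_bddBelow hE hC) m
  have hlb : E x (loA f n) ≤ EhatD E f x := R7le hE hC n
  rw [Real.dist_eq, abs_lt]
  constructor <;> linarith

/-- convexity of Ehat -/
lemma R9 {x : S} {f g : S → ℝ} {Cf Cg : ℝ} (hCf : ∀ y, |f y| ≤ Cf) (hCg : ∀ y, |g y| ≤ Cg)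
    (hf : Continuous f) (hg : Continuous g) {t : ℝ} (ht : t ∈ Set.Icc (0:ℝ) 1) :
    EhatD E (fun y => t * f y + (1 - t) * g y) x ≤ t * EhatD E f x + (1 - t) * EhatD E g x := by
  obtain ⟨ht0, ht1⟩ := ht
  have h0f : 0 ≤ Cf := bdd_nonneg hCf
  have h0g : 0 ≤ Cg := bdd_nonneg hCg
  set F : S → ℝ := fun y => t * f y + (1 - t) * g y with hF
  have hFC : ∀ y, |F y| ≤ Cf + Cg := by
    intro y
    have h1 := abs_le.1 (hCf y)
    have h2 := abs_le.1 (hCg y)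
    rw [abs_le]
    constructor <;> (simp only [hF]; nlinarith)
  have hFcont : Continuous F := (continuous_const.mul hf).add (continuous_const.mul hg)
  set ψ : ℕ → S → ℝ := fun k y => t * upA f k y + (1 - t) * upA g k y with hψ
  have hψB : ∀ k, InBUC (ψ k) := fun k => inBUC_comb t (1 - t) (upA_inBUC hCf k) (upA_inBUC hCg k)
  have hψanti : ∀ y, Antitone fun k => ψ k y := by
    intro y k l hkl
    have h1 := upA_antitone hCf y hkl
    have h2 := upA_antitone hCg y hkl
    simp only [hψ]
    nlinarith
  have hψlim : ∀ y, Tendsto (fun k => ψ k y) atTop (nhds (F y)) :=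
    fun y => ((upA_tendsto hCf hf y).const_mul t).add ((upA_tendsto hCg hg y).const_mul (1 - t))
  have htψ := L1 hE (x := x) hFC hFcont ψ hψB hψanti hψlim
  have htu := L1 hE (x := x) hCf hf (fun k => upA f k) (fun k => upA_inBUC hCf k)
    (upA_antitone hCf) (upA_tendsto hCf hf)
  have htv := L1 hE (x := x) hCg hg (fun k => upA g k) (fun k => upA_inBUC hCg k)
    (upA_antitone hCg) (upA_tendsto hCg hg)
  refine le_of_tendsto_of_tendsto' htψ ((htu.const_mul t).add (htv.const_mul (1 - t))) ?_
  intro k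
  exact hE.2.2.2.1 x (upA f k) (upA_inBUC hCf k) (upA g k) (upA_inBUC hCg k) t ⟨ht0, ht1⟩

/-- continuity from above of Ehat -/
lemma R10 {x : S} (fn : ℕ → S → ℝ) (f : S → ℝ) (hfn : ∀ n, InCb (fn n)) (hfC : InCb f)
    (hanti : ∀ y, Antitone fun n => fn n y)
    (hlim : ∀ y, Tendsto (fun n => fn n y) atTop (nhds (f y))) :
    Tendsto (fun n => EhatD E (fn n) x) atTop (nhds (EhatD E f x)) := by
  obtain ⟨C, hC⟩ := hfC.2
  have hCn : ∀ n, ∃ Cn : ℝ, ∀ y, |fn n y| ≤ Cn := fun n => (hfn n).2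
  choose Cn hCn using hCn
  have hfle : ∀ n y, f y ≤ fn n y := by
    intro n y
    exact le_of_tendsto (hlim y) (eventually_atTop.2 ⟨n, fun m hm => hanti y hm⟩)
  set ψ : ℕ → S → ℝ := fun n y => upA (fn n) n y with hψ
  have hψB : ∀ n, InBUC (ψ n) := fun n => upA_inBUC (hCn n) n
  have hψanti : ∀ y, Antitone fun n => ψ n y := by
    intro y n m hnm
    calc upA (fn m) m y ≤ upA (fn m) n y := upA_antitone (hCn m) y hnm
      _ ≤ upA (fn n) n y := upA_mono (hCn n) (fun z => hanti z hnm) n y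
  have hψge : ∀ n y, f y ≤ ψ n y := fun n y =>
    le_trans (hfle n y) (le_upA (hCn n) n y)
  have hψlim : ∀ y, Tendsto (fun n => ψ n y) atTop (nhds (f y)) := by
    intro y
    have hbdd : BddBelow (Set.range fun n => ψ n y) := ⟨f y, by rintro _ ⟨n, rfl⟩; exact hψge n y⟩
    have htend : Tendsto (fun n => ψ n y) atTop (nhds (⨅ n, ψ n y)) :=
      tendsto_atTop_ciInf (hψanti y) hbdd
    have hLle : ∀ m, (⨅ n, ψ n y) ≤ fn m y := by
      intro m
      refine ge_of_tendsto (upA_tendsto (hCn m) (hfn m).1 y) ?_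
      refine eventually_atTop.2 ⟨m, fun n hn => ?_⟩
      refine le_trans (ciInf_le hbdd n) ?_
      exact upA_mono (hCn m) (fun z => hanti z hn) n y
    have hLf : (⨅ n, ψ n y) = f y := by
      refine le_antisymm ?_ (le_ciInf fun n => hψge n y)
      exact ge_of_tendsto (hlim y) (Eventually.of_forall hLle)
    rwa [hLf] at htend
  have htψ := L1 hE (x := x) hC hfC.1 ψ hψB hψanti hψlim
  have hlow : ∀ n, EhatD E f x ≤ EhatD E (fn n) x := fun n =>
    R2 hE hC (hCn n) (hfle n)
  have hup : ∀ n, EhatD E (fn n) x ≤ E x (ψ n) := fun n =>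
    R5 hE (hCn n) (hfn n).1 (hψB n) (fun y => le_upA (hCn n) n y)
  exact tendsto_of_tendsto_of_tendsto_of_le_of_le tendsto_const_nhds htψ hlow hup

end E
end Stmt18

theorem stmt18 {S : Type*} [MetricSpace S] [TopologicalSpace.SeparableSpace S]
    [CompleteSpace S]
    (E : S → (S → ℝ) → ℝ)
    (hE : IsConvexKernelOn {f : S → ℝ | InBUC f} E) :
    ∃ Ehat : S → (S → ℝ) → ℝ,
      (IsConvexKernelOn {f : S → ℝ | InCb f} Ehat ∧
        ∀ (x : S) (f : S → ℝ), InBUC f → Ehat x f = E x f) ∧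
      -- uniqueness
      (∀ E' : S → (S → ℝ) → ℝ,
        IsConvexKernelOn {f : S → ℝ | InCb f} E' →
        (∀ (x : S) (f : S → ℝ), InBUC f → E' x f = E x f) →
        ∀ (x : S) (f : S → ℝ), InCb f → E' x f = Ehat x f) := by
  classical
  rcases isEmpty_or_nonempty S with hS | hS
  · refine ⟨fun _ _ => 0, ⟨⟨fun x => (IsEmpty.false x).elim, fun x => (IsEmpty.false x).elim,
      fun f _ => ⟨continuous_const, 0, fun x => (IsEmpty.false x).elim⟩,
      fun x => (IsEmpty.false x).elim, fun x => (IsEmpty.false x).elim⟩,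
      fun x => (IsEmpty.false x).elim⟩,
      fun E' _ _ x => (IsEmpty.false x).elim⟩
  · open Stmt18 in
    refine ⟨fun x f => EhatD E f x, ⟨⟨?_, ?_, ?_, ?_, ?_⟩, ?_⟩, ?_⟩
    · intro x f hf g hg h
      obtain ⟨Cf, hCf⟩ := (hf : InCb f).2
      obtain ⟨Cg, hCg⟩ := (hg : InCb g).2
      exact R2 hE hCf hCg h
    · intro x c
      exact R3 hE c
    · intro f hf
      obtain ⟨C, hC⟩ := (hf : InCb f).2
      exact ⟨R8 hE hC (hf : InCb f).1, C, fun x => R4 hE hC⟩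
    · intro x f hf g hg t ht
      obtain ⟨Cf, hCf⟩ := (hf : InCb f).2
      obtain ⟨Cg, hCg⟩ := (hg : InCb g).2
      exact R9 hE hCf hCg (hf : InCb f).1 (hg : InCb g).1 ht
    · intro x fn f h1 h2 h3 h4
      exact R10 hE fn f h1 h2 h3 h4
    · intro x f hf
      exact R1 hE hf
    · intro E' hE' hrest x f hf
      obtain ⟨C, hC⟩ := hf.2
      have h1 : Tendsto (fun n => E' x (upA f n)) atTop (nhds (E' x f)) :=
        hE'.2.2.2.2 x (fun n => upA f n) f
          (fun n => ⟨(upA_uc hC n).continuous, C, upA_abs_le hC n⟩) hf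
          (upA_antitone hC) (upA_tendsto hC hf.1)
      have h2 : (fun n => E' x (upA f n)) = fun n => E x (upA f n) :=
        funext fun n => hrest x _ (upA_inBUC hC n)
      have h3 := L1 hE (x := x) hC hf.1 (fun n => upA f n)
        (fun n => upA_inBUC hC n) (upA_antitone hC) (upA_tendsto hC hf.1)
      rw [h2] at h1
      exact tendsto_nhds_unique h1 h3
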